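/- Let A be an integral domain with fraction field K, let 𝒫 be a set of prime ideals of A, and let B = ⋂_{P∈𝒫} A_P. If B = A_S for some multiplicatively closed subset S of A, then for every x ∈ K with (A :_A x) ⊆ ⋃_{P∈𝒫} P, there exists P ∈ 𝒫 with (A :_A x) ⊆ P. -/
import Mathlib


/-- The localization `A_P` of a subring `A` of a field `K` at a prime `P`,
viewed as a subset of `K`. -/
def locAt {K : Type*} [Field K] (A : Subring K) (P : Ideal A) : Set K :=
  {x : K | ∃ a s : A, s ∉ P ∧ x = (a : K) / (s : K)}

theorem stmt5 {K : Type*} [Field K] (A B : Subring K) (hAB : A ≤ B)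
    (hfrac : ∀ x : K, ∃ a b : A, (b : K) ≠ 0 ∧ x = (a : K) / (b : K))
    (PP : Set (Ideal A)) (hprime : ∀ P ∈ PP, P.IsPrime)
    (hB : ∀ x : K, x ∈ B ↔ ∀ P ∈ PP, x ∈ locAt A P)
    (S : Set A) (hS1 : (1 : A) ∈ S) (hSmul : ∀ s ∈ S, ∀ t ∈ S, s * t ∈ S)
    (hS0 : (0 : A) ∉ S)
    (hloc : ∀ x : K, x ∈ B ↔ ∃ a : A, ∃ s ∈ S, x = (a : K) / (s : K)) :
    ∀ x : K, ({a : A | (a : K) * x ∈ A} ⊆ ⋃ P ∈ PP, (P : Set A)) →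
      ∃ P ∈ PP, {a : A | (a : K) * x ∈ A} ⊆ (P : Set A) := by
  intro x hx
  by_contra hcon
  push_neg at hcon
  -- x belongs to every A_P, since the denominator ideal is not contained in P
  have hxB : x ∈ B := by
    rw [hB]
    intro P hP
    obtain ⟨a, haD, haP⟩ := Set.not_subset.mp (hcon P hP)
    have ha0 : (a : K) ≠ 0 := by
      intro h
      apply haP
      have : a = 0 := Subtype.coe_injective h
      rw [this]
      exact P.zero_mem
    exact ⟨⟨(a : K) * x, haD⟩, a, haP, by field_simp⟩
  -- so x = a / s with s ∈ S
  obtain ⟨a, s, hsS, hxas⟩ := (hloc x).mp hxB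
  have hs0 : (s : K) ≠ 0 := by
    intro h
    have : s = 0 := by exact_mod_cast h
    exact hS0 (this ▸ hsS)
  have hsD : s ∈ {a : A | (a : K) * x ∈ A} := by
    have : (s : K) * x = (a : K) := by rw [hxas]; field_simp
    rw [Set.mem_setOf_eq, this]; exact a.2
  obtain ⟨P₀, hP₀, hsP₀⟩ := Set.mem_iUnion₂.mp (hx hsD)
  -- 1/s ∈ B, hence 1/s ∈ A_{P₀}
  have h1s : ((1 : A) : K) / (s : K) ∈ B := (hloc _).mpr ⟨1, s, hsS, rfl⟩
  obtain ⟨b, t, htP₀, hbt⟩ := (hB _).mp h1s P₀ hP₀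
  have ht0 : (t : K) ≠ 0 := by
    intro h
    apply htP₀
    have : t = 0 := Subtype.coe_injective h
    rw [this]; exact P₀.zero_mem
  have htbs : t = b * s := by
    apply Subtype.coe_injective
    have : ((1 : A) : K) * (t : K) = (b : K) * (s : K) :=
      (div_eq_div_iff hs0 ht0).mp hbt
    push_cast
    simpa using this
  exact htP₀ (htbs ▸ P₀.mul_mem_left b hsP₀)
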